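/- For γ ≥ 0: Z ≤ γ if and only if either S ≤ 0, or both S ≥ 0 and (1 + γ²/n)·S² ≤ γ²·Q. (Combined correctness of the feasibility reformulation of the minimization Z-test for nonnegative γ.) -/

import Mathlib

theorem stmt_9 (n : ℕ) (hn : 1 ≤ n) (t : Fin n → ℝ)
    (S Q σ Z : ℝ)
    (hS : S = ∑ k, t k) (hQ : Q = ∑ k, (t k) ^ 2)
    (hσ : σ = Real.sqrt (Q / n - (S / n) ^ 2)) (hσpos : 0 < σ)
    (hZ : Z = S / (Real.sqrt n * σ))
    (γ : ℝ) (hγ : 0 ≤ γ) :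
    Z ≤ γ ↔ (S ≤ 0 ∨ (0 ≤ S ∧ (1 + γ ^ 2 / n) * S ^ 2 ≤ γ ^ 2 * Q)) := by
  have hn0 : (0:ℝ) < n := by exact_mod_cast hn
  have harg : 0 < Q / n - (S / n) ^ 2 := Real.sqrt_pos.mp (hσ ▸ hσpos)
  have hσsq : σ ^ 2 = Q / n - (S / n) ^ 2 := by
    rw [hσ, Real.sq_sqrt harg.le]
  have hsqrtn : 0 < Real.sqrt n := Real.sqrt_pos.mpr hn0
  have hden : 0 < Real.sqrt n * σ := mul_pos hsqrtn hσpos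
  have hXsq : (γ * (Real.sqrt n * σ)) ^ 2 = γ ^ 2 * (Q - S ^ 2 / n) := by
    rw [mul_pow, mul_pow, Real.sq_sqrt hn0.le, hσsq]
    field_simp
  constructor
  · intro h
    by_cases hSpos : S ≤ 0
    · left; exact hSpos
    · right
      push_neg at hSpos
      refine ⟨hSpos.le, ?_⟩
      rw [hZ, div_le_iff₀ hden] at h
      have h2 : S ^ 2 ≤ (γ * (Real.sqrt n * σ)) ^ 2 := by nlinarith
      rw [hXsq] at h2
      have e1 : γ ^ 2 * (Q - S ^ 2 / n) = γ ^ 2 * Q - γ ^ 2 * (S ^ 2 / n) := by ring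
      have e2 : (1 + γ ^ 2 / n) * S ^ 2 = S ^ 2 + γ ^ 2 * (S ^ 2 / n) := by ring
      linarith [e1 ▸ h2, e2]
  · intro h
    rw [hZ, div_le_iff₀ hden]
    rcases h with h | ⟨hS0, h⟩
    · nlinarith
    · have h2 : S ^ 2 ≤ (γ * (Real.sqrt n * σ)) ^ 2 := by
        rw [hXsq]
        have e1 : γ ^ 2 * (Q - S ^ 2 / n) = γ ^ 2 * Q - γ ^ 2 * (S ^ 2 / n) := by ring
        have e2 : (1 + γ ^ 2 / n) * S ^ 2 = S ^ 2 + γ ^ 2 * (S ^ 2 / n) := by ring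
        linarith [e2 ▸ h, e1]
      nlinarith [mul_nonneg hγ hden.le]
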